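/- Let K be a random variable on ℕ∪{0} with finite mean E[K] > 0 and probability generating function f, and fix m ∈ ℕ with E[K·1{K ≤ m}] > 0. Let K̃ be K conditioned on K ≤ m, with probability generating function f̃. Then for all x ∈ (0,1]: 1 ≤ f'(x)/( f̃'(x)·P[K ≤ m] ) ≤ 1 + x·E[K·1{K>m}]/( E[K] − E[K·1{K>m}] ). -/
import Mathlib


open scoped BigOperators
open Finset

/-- A probability distribution on a finite set, given by its probability mass function. -/
def IsProbDist {Y : Type*} [Fintype Y] (P : Y → ℝ) : Prop :=
  (∀ y, 0 ≤ P y) ∧ ∑ y, P y = 1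

/-- A probability distribution on `ℕ ∪ {0}`, given by its probability mass function. -/
def IsProbDistNat (p : ℕ → ℝ) : Prop :=
  (∀ k, 0 ≤ p k) ∧ (∑' k, p k) = 1

/-- The Rényi divergence of order `lam ∈ (1, ∞)` between two distributions on a finite set:
`D_lam(P‖Q) = (lam-1)⁻¹ log (∑_y P(y)^lam Q(y)^(1-lam))`. -/
noncomputable def renyiDiv {Y : Type*} [Fintype Y] (lam : ℝ) (P Q : Y → ℝ) : ℝ :=
  (lam - 1)⁻¹ * Real.log (∑ y, P y ^ lam * Q y ^ (1 - lam))

/-- The max divergence `D_∞(P‖Q) = sup { log (P(S)/Q(S)) : S ⊆ Y, P(S) > 0 }`. -/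
noncomputable def maxDiv {Y : Type*} [Fintype Y] (P Q : Y → ℝ) : ℝ :=
  sSup {x : ℝ | ∃ S : Finset Y,
    0 < ∑ y ∈ S, P y ∧ x = Real.log ((∑ y ∈ S, P y) / (∑ y ∈ S, Q y))}

/-- `Q(≤ y)`, the probability of the lower set `{z : z ≤ y}`. -/
noncomputable def cdfLE {Y : Type*} [Fintype Y] [LinearOrder Y] (Q : Y → ℝ) (y : Y) : ℝ :=
  ∑ z ∈ Finset.univ.filter (fun z => z ≤ y), Q z

/-- `Q(< y)`, the probability of the strict lower set `{z : z < y}`. -/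
noncomputable def cdfLT {Y : Type*} [Fintype Y] [LinearOrder Y] (Q : Y → ℝ) (y : Y) : ℝ :=
  ∑ z ∈ Finset.univ.filter (fun z => z < y), Q z

/-- The probability generating function `f(x) = E[x^K] = ∑_k P[K=k] x^k`. -/
noncomputable def pgf (p : ℕ → ℝ) (x : ℝ) : ℝ := ∑' k, p k * x ^ k

/-- The derivative of the probability generating function, `f'(x) = E[K x^(K-1)]`. -/
noncomputable def pgfDeriv (p : ℕ → ℝ) (x : ℝ) : ℝ := ∑' k : ℕ, (k : ℝ) * p k * x ^ (k - 1)

/-- The distribution of the best (maximum) of `K` i.i.d. samples from `Q`, where the number of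
samples `K` is drawn first according to the pmf `p`; if `K = 0` the fixed output `y₀` is
returned.  Indeed `P[best ≤ y] = f(Q(≤ y))` for `K ≥ 1`, so the mass at `y` is
`f(Q(≤ y)) - f(Q(< y))`, plus the mass `P[K = 0]` at the default output `y₀`. -/
noncomputable def bestDist {Y : Type*} [Fintype Y] [LinearOrder Y]
    (p : ℕ → ℝ) (Q : Y → ℝ) (y₀ : Y) : Y → ℝ :=
  fun y => (pgf p (cdfLE Q y) - pgf p (cdfLT Q y)) + p 0 * (if y = y₀ then 1 else 0)

set_option maxHeartbeats 1000000 in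
/-- pgf comparison for the truncated count: if `K` has finite positive
mean, `K̃` is `K` conditioned on `K ≤ m` (with `E[K·1{K≤m}] > 0`), and `f, f̃` are their
pgfs, then for all `x ∈ (0,1]`:
`1 ≤ f'(x)/(f̃'(x)·P[K≤m]) ≤ 1 + x·E[K·1{K>m}]/(E[K] - E[K·1{K>m}])`. -/
theorem truncated_pgf_deriv_ratio
    (p : ℕ → ℝ) (hp : IsProbDistNat p)
    (hmean : Summable (fun k : ℕ => (k : ℝ) * p k))
    (hmeanpos : 0 < ∑' k : ℕ, (k : ℝ) * p k)
    (m : ℕ)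
    (hpos : 0 < ∑' k : ℕ, (if k ≤ m then (k : ℝ) * p k else 0))
    (x : ℝ) (hx : x ∈ Set.Ioc (0 : ℝ) 1) :
    1 ≤ pgfDeriv p x /
        (pgfDeriv (fun k => if k ≤ m then p k / ∑ j ∈ Finset.range (m + 1), p j else 0) x *
          ∑ j ∈ Finset.range (m + 1), p j) ∧
    pgfDeriv p x /
        (pgfDeriv (fun k => if k ≤ m then p k / ∑ j ∈ Finset.range (m + 1), p j else 0) x *
          ∑ j ∈ Finset.range (m + 1), p j) ≤
      1 + x * (∑' k : ℕ, if m < k then (k : ℝ) * p k else 0) /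
        ((∑' k : ℕ, (k : ℝ) * p k) - ∑' k : ℕ, if m < k then (k : ℝ) * p k else 0) := by
  classical
  obtain ⟨hx0, hx1⟩ := hx
  obtain ⟨hp0, _⟩ := hp
  have hm : m ≠ 0 := by
    rintro rfl
    have h0 : (fun k : ℕ => if k ≤ 0 then (k : ℝ) * p k else 0) = fun _ => 0 := by
      funext k; cases k <;> simp
    rw [h0, tsum_zero] at hpos
    exact lt_irrefl 0 hpos
  set S := ∑ j ∈ Finset.range (m + 1), p j with hS
  set A1 := ∑ k ∈ Finset.range (m + 1), (k : ℝ) * p k with hA1def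
  have hA1eq : (∑' k : ℕ, (if k ≤ m then (k : ℝ) * p k else 0)) = A1 := by
    rw [tsum_eq_sum (s := Finset.range (m + 1))
      (fun k hk => if_neg (by simpa [Nat.lt_succ_iff] using hk))]
    exact Finset.sum_congr rfl fun k hk =>
      if_pos (Nat.lt_succ_iff.mp (Finset.mem_range.mp hk))
  have hA1pos : 0 < A1 := hA1eq ▸ hpos
  have hSpos : 0 < S := by
    rcases (Finset.sum_nonneg fun j _ => hp0 j : (0:ℝ) ≤ S).lt_or_eq with h | h
    · exact h
    · exfalso
      have hall : ∀ j ∈ Finset.range (m + 1), p j = 0 :=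
        (Finset.sum_eq_zero_iff_of_nonneg (fun j _ => hp0 j)).mp h.symm
      have : A1 = 0 := Finset.sum_eq_zero fun k hk => by rw [hall k hk, mul_zero]
      exact hA1pos.ne' this
  have hg0 : ∀ k : ℕ, 0 ≤ (k : ℝ) * p k * x ^ (k - 1) := fun k =>
    mul_nonneg (mul_nonneg (Nat.cast_nonneg k) (hp0 k)) (pow_nonneg hx0.le _)
  have hgsum : Summable (fun k : ℕ => (k : ℝ) * p k * x ^ (k - 1)) := by
    apply Summable.of_nonneg_of_le hg0 _ hmean
    intro k
    calc (k : ℝ) * p k * x ^ (k - 1) ≤ (k : ℝ) * p k * 1 :=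
          mul_le_mul_of_nonneg_left (pow_le_one₀ hx0.le hx1)
            (mul_nonneg (Nat.cast_nonneg k) (hp0 k))
      _ = (k : ℝ) * p k := mul_one _
  set A := ∑ k ∈ Finset.range (m + 1), (k : ℝ) * p k * x ^ (k - 1) with hAdef
  set B := ∑' i : ℕ, ((i + (m + 1) : ℕ) : ℝ) * p (i + (m + 1)) * x ^ ((i + (m + 1)) - 1)
    with hBdef
  have hsplit : pgfDeriv p x = A + B := by
    rw [pgfDeriv, ← Summable.sum_add_tsum_nat_add (m + 1) hgsum]
  have hBnonneg : 0 ≤ B := tsum_nonneg fun i => hg0 _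
  -- tail mean
  set T := ∑' k : ℕ, (if m < k then (k : ℝ) * p k else 0) with hTdef
  have hfsum : Summable (fun k : ℕ => if m < k then (k : ℝ) * p k else 0) := by
    apply Summable.of_nonneg_of_le _ _ hmean
    · intro k; split
      · exact mul_nonneg (Nat.cast_nonneg _) (hp0 _)
      · exact le_refl 0
    · intro k; split
      · exact le_refl _
      · exact mul_nonneg (Nat.cast_nonneg _) (hp0 _)
  have hT'sum : Summable (fun i : ℕ => ((i + (m + 1) : ℕ) : ℝ) * p (i + (m + 1))) :=
    (summable_nat_add_iff (f := fun k : ℕ => (k : ℝ) * p k) (m + 1)).mpr hmean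
  have hTeq : T = ∑' i : ℕ, ((i + (m + 1) : ℕ) : ℝ) * p (i + (m + 1)) := by
    rw [hTdef, ← Summable.sum_add_tsum_nat_add (m + 1) hfsum]
    have h1 : ∑ i ∈ Finset.range (m + 1), (if m < i then (i : ℝ) * p i else 0) = 0 :=
      Finset.sum_eq_zero fun i hi =>
        if_neg (by simpa [Nat.lt_succ_iff] using Finset.mem_range.mp hi)
    have h2 : ∀ i : ℕ, (if m < i + (m + 1) then ((i + (m + 1) : ℕ) : ℝ) * p (i + (m + 1)) else 0)
        = ((i + (m + 1) : ℕ) : ℝ) * p (i + (m + 1)) := fun i => if_pos (by omega)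
    simp only [h2, h1, zero_add]
  have hTnonneg : 0 ≤ T :=
    tsum_nonneg fun k => by
      split
      · exact mul_nonneg (Nat.cast_nonneg _) (hp0 _)
      · exact le_refl 0
  have hMT : (∑' k : ℕ, (k : ℝ) * p k) - T = A1 := by
    rw [← Summable.sum_add_tsum_nat_add (m + 1) hmean, hTeq]
    ring
  -- B ≤ x^m * T
  have hBsum : Summable
      (fun i : ℕ => ((i + (m + 1) : ℕ) : ℝ) * p (i + (m + 1)) * x ^ ((i + (m + 1)) - 1)) :=
    (summable_nat_add_iff (f := fun k : ℕ => (k : ℝ) * p k * x ^ (k - 1)) (m + 1)).mpr hgsum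
  have hBle : B ≤ x ^ m * T := by
    have hle : ∀ i : ℕ, ((i + (m + 1) : ℕ) : ℝ) * p (i + (m + 1)) * x ^ ((i + (m + 1)) - 1)
        ≤ x ^ m * (((i + (m + 1) : ℕ) : ℝ) * p (i + (m + 1))) := by
      intro i
      have hpow : x ^ ((i + (m + 1)) - 1) ≤ x ^ m :=
        pow_le_pow_of_le_one hx0.le hx1 (by omega)
      calc ((i + (m + 1) : ℕ) : ℝ) * p (i + (m + 1)) * x ^ ((i + (m + 1)) - 1)
          ≤ ((i + (m + 1) : ℕ) : ℝ) * p (i + (m + 1)) * x ^ m :=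
            mul_le_mul_of_nonneg_left hpow (mul_nonneg (Nat.cast_nonneg _) (hp0 _))
        _ = x ^ m * (((i + (m + 1) : ℕ) : ℝ) * p (i + (m + 1))) := by ring
    have h := Summable.tsum_le_tsum hle hBsum ((hT'sum).mul_left (x ^ m))
    rw [tsum_mul_left] at h
    rw [hBdef, hTeq]
    exact h
  -- x^(m-1) * A1 ≤ A
  have hAge : x ^ (m - 1) * A1 ≤ A := by
    rw [hAdef, hA1def, Finset.mul_sum]
    apply Finset.sum_le_sum
    intro k hk
    have hpow : x ^ (m - 1) ≤ x ^ (k - 1) :=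
      pow_le_pow_of_le_one hx0.le hx1
        (Nat.sub_le_sub_right (Nat.lt_succ_iff.mp (Finset.mem_range.mp hk)) 1)
    calc x ^ (m - 1) * ((k : ℝ) * p k) = (k : ℝ) * p k * x ^ (m - 1) := by ring
      _ ≤ (k : ℝ) * p k * x ^ (k - 1) :=
          mul_le_mul_of_nonneg_left hpow (mul_nonneg (Nat.cast_nonneg _) (hp0 _))
  have hxA1pos : 0 < x ^ (m - 1) * A1 := mul_pos (pow_pos hx0 _) hA1pos
  have hApos : 0 < A := lt_of_lt_of_le hxA1pos hAge
  -- denominator identity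
  have hDen : pgfDeriv (fun k => if k ≤ m then p k / S else 0) x * S = A := by
    rw [pgfDeriv, tsum_eq_sum (s := Finset.range (m + 1))
      (fun k hk => by rw [if_neg (by simpa [Nat.lt_succ_iff] using hk), mul_zero, zero_mul]),
      Finset.sum_mul]
    refine Finset.sum_congr rfl fun k hk => ?_
    rw [if_pos (Nat.lt_succ_iff.mp (Finset.mem_range.mp hk))]
    field_simp
  rw [hDen, hsplit, hMT]
  constructor
  · exact (one_le_div hApos).mpr (le_add_of_nonneg_right hBnonneg)
  · rw [add_div, div_self hApos.ne']
    have h1 : B / A ≤ (x ^ m * T) / (x ^ (m - 1) * A1) :=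
      div_le_div₀ (mul_nonneg (pow_nonneg hx0.le _) hTnonneg) hBle hxA1pos hAge
    have hxm : x ^ m = x ^ (m - 1) * x := by
      rw [← pow_succ]
      congr 1
      omega
    have h2 : (x ^ m * T) / (x ^ (m - 1) * A1) = x * T / A1 := by
      rw [hxm, mul_assoc, mul_div_mul_left _ _ (pow_ne_zero _ hx0.ne')]
    linarith [h1, h2 ▸ h1]
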